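/- For every index i ∈ {1,...,N} and every nonnegative integer k, ∑_{σ∈S_N} ε(σ) λ_{σ(i)}^{k} ∏_{j=1}^N p_{jσ(j)} = (A^k)_{ii}; that is, the i-th marginal of the joint spectral measure is the spectral measure of A at vertex i, whose k-th moment is the (i,i) entry of A^k. -/

import Mathlib

open Matrix BigOperators

/-- The `i`-th marginal of the joint spectral measure is the spectral measure of `A` at
vertex `i`: its `k`-th moment is `(A^k)_{ii}`. -/
theorem marginal_moment_eq_diag_entry (N : ℕ)
    (A P : Matrix (Fin N) (Fin N) ℝ) (lam : Fin N → ℝ)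
    (hsymm : A.IsSymm)
    (hdecomp : A = P * Matrix.diagonal lam * Pᵀ)
    (horth : P * Pᵀ = 1)
    (hdet : P.det = 1)
    (i : Fin N) (k : ℕ) :
    ∑ σ : Equiv.Perm (Fin N),
        ((Equiv.Perm.sign σ : ℤ) : ℝ) * lam (σ i) ^ k * ∏ j : Fin N, P j (σ j)
      = (A ^ k) i i := by
  have hPt : Pᵀ * P = 1 := mul_eq_one_comm.mp horth
  have hdetPt : Pᵀ.det = 1 := by rw [Matrix.det_transpose, hdet]
  have hadj : Pᵀ.adjugate = P := by
    have h1 : Pᵀ * Pᵀ.adjugate = 1 := by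
      rw [Matrix.mul_adjugate, hdetPt, one_smul]
    calc Pᵀ.adjugate = (P * Pᵀ) * Pᵀ.adjugate := by rw [horth, one_mul]
      _ = P * (Pᵀ * Pᵀ.adjugate) := by rw [Matrix.mul_assoc]
      _ = P := by rw [h1, Matrix.mul_one]
  have hk : A ^ k = P * Matrix.diagonal (fun m => lam m ^ k) * Pᵀ := by
    induction k with
    | zero =>
      simp only [pow_zero]
      have : Matrix.diagonal (fun _ : Fin N => (1:ℝ)) = 1 := Matrix.diagonal_one
      rw [this, Matrix.mul_one, horth]
    | succ n ih =>
      rw [pow_succ, ih, hdecomp]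
      rw [show ∀ B C D E : Matrix (Fin N) (Fin N) ℝ,
        B * C * D * (B * E * D) = B * (C * ((D * B) * E)) * D by
          intros; noncomm_ring]
      rw [hPt, Matrix.one_mul, Matrix.diagonal_mul_diagonal]
      have : (fun m => lam m ^ n * lam m) = fun m => lam m ^ (n+1) := by
        funext m; ring
      rw [this]
  set b : Fin N → ℝ := fun r => lam r ^ k * P i r with hb
  have hM : (∑ σ : Equiv.Perm (Fin N),
        ((Equiv.Perm.sign σ : ℤ) : ℝ) * lam (σ i) ^ k * ∏ j : Fin N, P j (σ j))
      = (Pᵀ.updateCol i b).det := by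
    rw [Matrix.det_apply']
    refine Finset.sum_congr rfl fun σ _ => ?_
    have hprod : (∏ j : Fin N, (Pᵀ.updateCol i b) (σ j) j)
        = lam (σ i) ^ k * ∏ j : Fin N, P j (σ j) := by
      rw [← Finset.mul_prod_erase Finset.univ (fun j => (Pᵀ.updateCol i b) (σ j) j)
        (Finset.mem_univ i),
        ← Finset.mul_prod_erase Finset.univ (fun j => P j (σ j)) (Finset.mem_univ i)]
      have h2 : ∀ j ∈ Finset.univ.erase i,
          (Pᵀ.updateCol i b) (σ j) j = P j (σ j) := by
        intro j hj
        rw [Matrix.updateCol_apply, if_neg (Finset.ne_of_mem_erase hj),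
          Matrix.transpose_apply]
      rw [Finset.prod_congr rfl h2]
      rw [Matrix.updateCol_apply, if_pos rfl, hb]
      simp only [Matrix.transpose_apply]
      ring
    rw [hprod]
    ring
  rw [hM, ← Matrix.cramer_apply, Matrix.cramer_eq_adjugate_mulVec, hadj, hk]
  simp only [Matrix.mulVec, dotProduct, Matrix.mul_apply,
    Matrix.diagonal_apply, Matrix.transpose_apply, hb]
  refine Finset.sum_congr rfl fun m _ => ?_
  rw [show (∑ y : Fin N, P i y * if y = m then lam y ^ k else 0)
      = P i m * lam m ^ k by simp [mul_ite]]
  ring
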